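/- Let W ⊆ ℝⁿ be a linear subspace and let [n] = B ∪ N and [n] = B̂ ∪ N̂ be two partitions into disjoint sets. Let ℓ = ℓ_N^W : ℝ^N → ℝ^B and ℓ̂ = ℓ_{N̂}^W : ℝ^{N̂} → ℝ^{B̂} be the corresponding lifting maps. Then σ_i(ℓ) ≥ σ_{i + |N Δ N̂|}(ℓ̂) for every i ≥ 1, where N Δ N̂ = (N \ N̂) ∪ (N̂ \ N) is the symmetric difference and σ_k denotes the k-th largest singular value, with the convention that σ_k of a map is 0 whenever k exceeds its rank (in particular whenever k exceeds the dimension of its domain). -/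

import Mathlib

open scoped RealInnerProductSpace

/-- The coordinate projection `π_I : ℝⁿ → ℝ^I` as a linear map. -/
noncomputable def coordRestrict {n : ℕ} (I : Finset (Fin n)) :
    EuclideanSpace ℝ (Fin n) →ₗ[ℝ] EuclideanSpace ℝ {i : Fin n // i ∈ I} where
  toFun x := WithLp.toLp 2 (fun i => x i.1)
  map_add' _ _ := rfl
  map_smul' _ _ := rfl

/-- `L` is the lifting map `L_I^W : ℝ^I → W`: for every `x`, `L x` is the minimum-norm
element of `{w ∈ W : w_I = Π_{π_I(W)}(x)}` (equivalently, of
`{w ∈ W : w_I - x ∈ (π_I(W))ᗮ}`). -/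
def IsLiftingMap {n : ℕ} (I : Finset (Fin n)) (W : Submodule ℝ (EuclideanSpace ℝ (Fin n)))
    (L : EuclideanSpace ℝ {i : Fin n // i ∈ I} →ₗ[ℝ] EuclideanSpace ℝ (Fin n)) : Prop :=
  ∀ x, (L x ∈ W ∧ coordRestrict I (L x) - x ∈ (W.map (coordRestrict I))ᗮ) ∧
    ∀ w ∈ W, coordRestrict I w - x ∈ (W.map (coordRestrict I))ᗮ → ‖L x‖ ≤ ‖w‖

/-- The `k`-th largest singular value of a linear map between finite-dimensional
normed spaces, via the Courant–Fischer characterization, with the convention that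
it is `0` when `k` exceeds the dimension of the domain (in particular it is `0`
whenever `k` exceeds the rank). -/
noncomputable def singularValue {E F : Type*} [NormedAddCommGroup E] [NormedAddCommGroup F]
    [Module ℝ E] [Module ℝ F] (M : E →ₗ[ℝ] F) (k : ℕ) : ℝ :=
  if k ≤ Module.finrank ℝ E then
    sInf {t : ℝ | ∃ S : Submodule ℝ E,
      Module.finrank ℝ S = Module.finrank ℝ E - k + 1 ∧
      t = sSup {r : ℝ | ∃ u ∈ S, u ≠ 0 ∧ r = ‖M u‖ / ‖u‖}}
  else 0

open Module Submodule Finset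

section Helpers

lemma normsq_eq_sum {ι : Type*} [Fintype ι] (v : EuclideanSpace ℝ ι) :
    ‖v‖ ^ 2 = ∑ i, (v i) ^ 2 := by
  rw [EuclideanSpace.norm_eq, Real.sq_sqrt (by positivity)]
  simp [Real.norm_eq_abs, sq_abs]

lemma normsq_coordRestrict {n : ℕ} (I : Finset (Fin n)) (v : EuclideanSpace ℝ (Fin n)) :
    ‖coordRestrict I v‖ ^ 2 = ∑ i ∈ I, (v i) ^ 2 := by
  rw [normsq_eq_sum]
  rw [← Finset.sum_coe_sort I (fun i => (v i) ^ 2)]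
  rfl

lemma normsq_split {n : ℕ} {B N : Finset (Fin n)} (h : B ∪ N = Finset.univ)
    (hd : Disjoint B N) (v : EuclideanSpace ℝ (Fin n)) :
    ‖v‖ ^ 2 = ‖coordRestrict B v‖ ^ 2 + ‖coordRestrict N v‖ ^ 2 := by
  rw [normsq_eq_sum, normsq_coordRestrict, normsq_coordRestrict,
    ← Finset.sum_union hd, h]

lemma finrank_map_add_finrank_inf_ker {E F : Type*} [AddCommGroup E] [Module ℝ E]
    [AddCommGroup F] [Module ℝ F] [FiniteDimensional ℝ E]
    (p : Submodule ℝ E) (f : E →ₗ[ℝ] F) :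
    finrank ℝ (p.map f) + finrank ℝ (p ⊓ LinearMap.ker f : Submodule ℝ E) = finrank ℝ p := by
  have h := (f.domRestrict p).finrank_range_add_finrank_ker
  rwa [LinearMap.range_domRestrict, LinearMap.ker_domRestrict,
    ← Submodule.finrank_map_subtype_eq p (Submodule.comap p.subtype (LinearMap.ker f)),
    Submodule.map_comap_subtype] at h

lemma exists_submodule_finrank_eq {V : Type*} [AddCommGroup V] [Module ℝ V]
    [FiniteDimensional ℝ V] {m : ℕ} (h : m ≤ finrank ℝ V) :
    ∃ S : Submodule ℝ V, finrank ℝ S = m := by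
  classical
  set b := finBasis ℝ V
  refine ⟨span ℝ (Set.range (b ∘ Fin.castLE h)), ?_⟩
  rw [finrank_span_eq_card (b.linearIndependent.comp _ (Fin.castLE_injective h))]
  simp

lemma exists_submodule_finrank_eq_le {V : Type*} [AddCommGroup V] [Module ℝ V]
    [FiniteDimensional ℝ V] (p : Submodule ℝ V) {m : ℕ} (h : m ≤ finrank ℝ p) :
    ∃ S : Submodule ℝ V, S ≤ p ∧ finrank ℝ S = m := by
  obtain ⟨Q, hQ⟩ := exists_submodule_finrank_eq (V := p) h
  exact ⟨Q.map p.subtype, Submodule.map_subtype_le p Q,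
    by rw [Submodule.finrank_map_subtype_eq]; exact hQ⟩

lemma singularValue_nonneg {E F : Type*} [NormedAddCommGroup E] [NormedAddCommGroup F]
    [Module ℝ E] [Module ℝ F] (M : E →ₗ[ℝ] F) (k : ℕ) : 0 ≤ singularValue M k := by
  unfold singularValue
  split
  · apply Real.sInf_nonneg
    rintro t ⟨S, -, rfl⟩
    apply Real.sSup_nonneg
    rintro r ⟨u, -, hu, rfl⟩
    positivity
  · exact le_refl 0

lemma singularValue_le_of_forall {E F E' F' : Type*}
    [NormedAddCommGroup E] [NormedSpace ℝ E] [FiniteDimensional ℝ E]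
    [NormedAddCommGroup F] [NormedSpace ℝ F]
    [NormedAddCommGroup E'] [NormedSpace ℝ E'] [FiniteDimensional ℝ E']
    [NormedAddCommGroup F'] [NormedSpace ℝ F']
    (M : E →ₗ[ℝ] F) (M' : E' →ₗ[ℝ] F') {k k' : ℕ}
    (hk : 1 ≤ k) (hkE : k ≤ finrank ℝ E) (hk'E : k' ≤ finrank ℝ E')
    (H : ∀ S : Submodule ℝ E, finrank ℝ S = finrank ℝ E - k + 1 →
      ∃ S' : Submodule ℝ E', finrank ℝ S' = finrank ℝ E' - k' + 1 ∧
        ∀ a : ℝ, 0 ≤ a → (∀ u ∈ S, ‖M u‖ ≤ a * ‖u‖) → ∀ u ∈ S', ‖M' u‖ ≤ a * ‖u‖) :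
    singularValue M' k' ≤ singularValue M k := by
  unfold singularValue
  rw [if_pos hkE, if_pos hk'E]
  apply le_csInf
  · obtain ⟨S, hS⟩ := exists_submodule_finrank_eq (V := E) (m := finrank ℝ E - k + 1) (by omega)
    exact ⟨_, S, hS, rfl⟩
  rintro t ⟨S, hSrank, rfl⟩
  set t := sSup {r | ∃ u ∈ S, u ≠ 0 ∧ r = ‖M u‖ / ‖u‖} with ht
  have ht0 : 0 ≤ t := Real.sSup_nonneg (by rintro r ⟨u, -, hu, rfl⟩; positivity)
  have hbdd : BddAbove {r | ∃ u ∈ S, u ≠ 0 ∧ r = ‖M u‖ / ‖u‖} := by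
    refine ⟨‖(LinearMap.toContinuousLinearMap M)‖, ?_⟩
    rintro r ⟨u, -, hu, rfl⟩
    rw [div_le_iff₀ (norm_pos_iff.mpr hu)]
    exact (LinearMap.toContinuousLinearMap M).le_opNorm u
  have hMS : ∀ u ∈ S, ‖M u‖ ≤ t * ‖u‖ := by
    intro u hu
    rcases eq_or_ne u 0 with rfl | hu0
    · simp
    · have h1 : ‖M u‖ / ‖u‖ ≤ t := le_csSup hbdd ⟨u, hu, hu0, rfl⟩
      rwa [div_le_iff₀ (norm_pos_iff.mpr hu0)] at h1
  obtain ⟨S', hS'rank, hS'⟩ := H S hSrank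
  have hle : sSup {r | ∃ u ∈ S', u ≠ 0 ∧ r = ‖M' u‖ / ‖u‖} ≤ t := by
    apply Real.sSup_le _ ht0
    rintro r ⟨u, huS, hu0, rfl⟩
    rw [div_le_iff₀ (norm_pos_iff.mpr hu0)]
    exact hS' t ht0 hMS u huS
  refine le_trans (csInf_le ?_ ⟨S', hS'rank, rfl⟩) hle
  refine ⟨0, ?_⟩
  rintro x ⟨S'', -, rfl⟩
  exact Real.sSup_nonneg (by rintro r ⟨u, -, hu, rfl⟩; positivity)

variable {n : ℕ} {I : Finset (Fin n)} {W : Submodule ℝ (EuclideanSpace ℝ (Fin n))}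
  {L : EuclideanSpace ℝ {i : Fin n // i ∈ I} →ₗ[ℝ] EuclideanSpace ℝ (Fin n)}

lemma finrank_EI (I : Finset (Fin n)) :
    finrank ℝ (EuclideanSpace ℝ {i : Fin n // i ∈ I}) = I.card := by
  rw [finrank_euclideanSpace]
  exact Fintype.card_coe I

lemma coordRestrict_eq_zero_iff {v : EuclideanSpace ℝ (Fin n)} :
    coordRestrict I v = 0 ↔ ∀ i ∈ I, v i = 0 := by
  constructor
  · intro h i hi
    exact congrArg (fun f : EuclideanSpace ℝ {i : Fin n // i ∈ I} => f ⟨i, hi⟩) h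
  · intro h
    ext i
    exact h i.1 i.2

lemma lift_mem (hL : IsLiftingMap I W L) (x) : L x ∈ W := (hL x).1.1

lemma lift_coord_eq (hL : IsLiftingMap I W L) {x} (hx : x ∈ W.map (coordRestrict I)) :
    coordRestrict I (L x) = x := by
  have h1 := (hL x).1.2
  have h2 : coordRestrict I (L x) ∈ W.map (coordRestrict I) := ⟨L x, (hL x).1.1, rfl⟩
  have h3 : coordRestrict I (L x) - x ∈
      (W.map (coordRestrict I)) ⊓ (W.map (coordRestrict I))ᗮ := ⟨sub_mem h2 hx, h1⟩
  rw [Submodule.inf_orthogonal_eq_bot] at h3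
  simpa [sub_eq_zero] using h3

lemma lift_min (hL : IsLiftingMap I W L) {x} {w} (hw : w ∈ W)
    (h : coordRestrict I w = x) : ‖L x‖ ≤ ‖w‖ :=
  (hL x).2 w hw (by rw [h, sub_self]; exact zero_mem _)

lemma lift_orth_zero (hL : IsLiftingMap I W L) {z} (hz : z ∈ (W.map (coordRestrict I))ᗮ) :
    L z = 0 := by
  have h := (hL z).2 0 (zero_mem W) (by simpa using neg_mem hz)
  simp only [norm_zero] at h
  exact norm_le_zero_iff.mp h

end Helpers

theorem statement19 (n : ℕ)
    (W : Submodule ℝ (EuclideanSpace ℝ (Fin n)))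
    (B N B' N' : Finset (Fin n))
    (hBN : B ∪ N = Finset.univ) (hdisj : Disjoint B N)
    (hBN' : B' ∪ N' = Finset.univ) (hdisj' : Disjoint B' N')
    -- `L` is the lifting map `L_N^W` and `L'` is the lifting map `L_{N'}^W`,
    -- so `ℓ = π_B ∘ L : ℝ^N → ℝ^B` and `ℓ' = π_{B'} ∘ L' : ℝ^{N'} → ℝ^{B'}`
    (L : EuclideanSpace ℝ {i : Fin n // i ∈ N} →ₗ[ℝ] EuclideanSpace ℝ (Fin n))
    (L' : EuclideanSpace ℝ {i : Fin n // i ∈ N'} →ₗ[ℝ] EuclideanSpace ℝ (Fin n))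
    (hL : IsLiftingMap N W L) (hL' : IsLiftingMap N' W L') :
    ∀ i : ℕ, 1 ≤ i →
      singularValue ((coordRestrict B').comp L') (i + (symmDiff N N').card) ≤
        singularValue ((coordRestrict B).comp L) i := by
  classical
  intro k hk
  set d1 := (N \ N').card with hd1
  set d2 := (N' \ N).card with hd2
  have hd : (symmDiff N N').card = d1 + d2 := by
    rw [symmDiff_def]
    exact Finset.card_union_of_disjoint disjoint_sdiff_sdiff
  rw [hd]
  set V := W.map (coordRestrict N) with hV
  set V' := W.map (coordRestrict N') with hV'
  have hEN : finrank ℝ (EuclideanSpace ℝ {i : Fin n // i ∈ N}) = N.card := finrank_EI N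
  have hEN' : finrank ℝ (EuclideanSpace ℝ {i : Fin n // i ∈ N'}) = N'.card := finrank_EI N'
  by_cases hcase : k + (d1 + d2) ≤ N'.card
  · -- main case
    have hcards : N'.card ≤ N.card + d2 := by
      have h1 := Finset.card_inter_add_card_sdiff N' N
      have h2 : (N' ∩ N).card ≤ N.card := Finset.card_le_card Finset.inter_subset_right
      omega
    have hkN : k ≤ N.card := by omega
    -- dimension comparison between V and V'
    have hdimV : finrank ℝ V +
        finrank ℝ (W ⊓ LinearMap.ker (coordRestrict N) : Submodule ℝ _) = finrank ℝ W :=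
      finrank_map_add_finrank_inf_ker W (coordRestrict N)
    have hdimV' : finrank ℝ V' +
        finrank ℝ (W ⊓ LinearMap.ker (coordRestrict N') : Submodule ℝ _) = finrank ℝ W :=
      finrank_map_add_finrank_inf_ker W (coordRestrict N')
    have hAA' : finrank ℝ (W ⊓ LinearMap.ker (coordRestrict N) : Submodule ℝ _)
        ≤ finrank ℝ (W ⊓ LinearMap.ker (coordRestrict N') : Submodule ℝ _) + d2 := by
      have h1 := finrank_map_add_finrank_inf_ker
        (W ⊓ LinearMap.ker (coordRestrict N)) (coordRestrict (N' \ N))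
      have h2 : finrank ℝ
          (((W ⊓ LinearMap.ker (coordRestrict N)).map (coordRestrict (N' \ N)))) ≤ d2 := by
        refine le_trans (Submodule.finrank_le _) ?_
        rw [finrank_EI]
      have h3 : (W ⊓ LinearMap.ker (coordRestrict N)) ⊓ LinearMap.ker (coordRestrict (N' \ N))
          ≤ W ⊓ LinearMap.ker (coordRestrict N') := by
        intro w hw
        simp only [Submodule.mem_inf, LinearMap.mem_ker, coordRestrict_eq_zero_iff] at hw ⊢
        obtain ⟨⟨hwW, hwN⟩, hwd⟩ := hw
        refine ⟨hwW, fun i hi => ?_⟩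
        by_cases hiN : i ∈ N
        · exact hwN i hiN
        · exact hwd i (Finset.mem_sdiff.mpr ⟨hi, hiN⟩)
      have h4 := Submodule.finrank_mono h3
      omega
    have hVV' : finrank ℝ V' ≤ finrank ℝ V + d2 := by omega
    apply singularValue_le_of_forall _ _ hk (by rw [hEN]; exact hkN) (by rw [hEN']; exact hcase)
    intro S hSrank
    rw [hEN] at hSrank
    set S₀ := S ⊓ V with hS₀def
    set T := (S₀.map L) ⊓ LinearMap.ker (coordRestrict (N \ N')) with hTdef
    set S1 := T.map (coordRestrict N') with hS1def
    -- dimension of S₀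
    have hfS₀ : finrank ℝ S₀ + k ≥ finrank ℝ V + 1 := by
      have h1 := Submodule.finrank_sup_add_finrank_inf_eq S V
      rw [← hS₀def] at h1
      have h2 : finrank ℝ (S ⊔ V : Submodule ℝ _) ≤ N.card := by
        rw [← hEN]; exact Submodule.finrank_le _
      have h3 : finrank ℝ V ≤ N.card := by rw [← hEN]; exact Submodule.finrank_le _
      omega
    -- L is injective on S₀ : mapping back with coordRestrict N recovers S₀
    have hback : (S₀.map L).map (coordRestrict N) = S₀ := by
      apply le_antisymm
      · rintro x ⟨w, ⟨v, hv, rfl⟩, rfl⟩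
        have hvV : v ∈ V := (Submodule.mem_inf.mp hv).2
        rwa [lift_coord_eq hL hvV]
      · intro v hv
        have hvV : v ∈ V := (Submodule.mem_inf.mp hv).2
        exact ⟨L v, ⟨v, hv, rfl⟩, lift_coord_eq hL hvV⟩
    have hfmapL : finrank ℝ (S₀.map L) = finrank ℝ S₀ := by
      have h1 : finrank ℝ (S₀.map L) ≤ finrank ℝ S₀ := Submodule.finrank_map_le L S₀
      have h2 : finrank ℝ S₀ ≤ finrank ℝ (S₀.map L) := by
        conv_lhs => rw [← hback]
        exact Submodule.finrank_map_le _ _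
      omega
    have hfT : finrank ℝ T + d1 ≥ finrank ℝ (S₀.map L) := by
      have h1 := finrank_map_add_finrank_inf_ker (S₀.map L) (coordRestrict (N \ N'))
      rw [← hTdef] at h1
      have h2 : finrank ℝ ((S₀.map L).map (coordRestrict (N \ N'))) ≤ d1 := by
        refine le_trans (Submodule.finrank_le _) ?_
        rw [finrank_EI]
      omega
    -- coordRestrict N' is injective on T
    have hTker : T ⊓ LinearMap.ker (coordRestrict N') = ⊥ := by
      rw [Submodule.eq_bot_iff]
      rintro w hw
      obtain ⟨hwT, hwk'⟩ := Submodule.mem_inf.mp hw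
      obtain ⟨hwmap, hwk1⟩ := Submodule.mem_inf.mp hwT
      obtain ⟨v, hv, rfl⟩ := hwmap
      have hvV : v ∈ V := (Submodule.mem_inf.mp hv).2
      have hc : coordRestrict N (L v) = v := lift_coord_eq hL hvV
      have hv0 : v = 0 := by
        rw [← hc]
        rw [coordRestrict_eq_zero_iff]
        intro i hiN
        by_cases hiN' : i ∈ N'
        · exact coordRestrict_eq_zero_iff.mp (LinearMap.mem_ker.mp hwk') i hiN'
        · exact coordRestrict_eq_zero_iff.mp (LinearMap.mem_ker.mp hwk1) i
            (Finset.mem_sdiff.mpr ⟨hiN, hiN'⟩)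
      rw [hv0, map_zero]
    have hfS1 : finrank ℝ S1 = finrank ℝ T := by
      have h1 := finrank_map_add_finrank_inf_ker T (coordRestrict N')
      rw [← hS1def, hTker] at h1
      simpa using h1
    have hS1V' : S1 ≤ V' := by
      rintro x ⟨w, hwT, rfl⟩
      obtain ⟨hwmap, -⟩ := Submodule.mem_inf.mp hwT
      obtain ⟨v, hv, rfl⟩ := hwmap
      exact ⟨L v, lift_mem hL v, rfl⟩
    have forth : finrank ℝ V' + finrank ℝ V'ᗮ = N'.card := by
      rw [← hEN']
      exact Submodule.finrank_add_finrank_orthogonal V'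
    have hinfbot : S1 ⊓ V'ᗮ = ⊥ := by
      rw [eq_bot_iff]
      exact le_trans (inf_le_inf_right V'ᗮ hS1V') (le_of_eq (Submodule.inf_orthogonal_eq_bot V'))
    have hfP : finrank ℝ (S1 ⊔ V'ᗮ : Submodule ℝ _) = finrank ℝ S1 + finrank ℝ V'ᗮ := by
      have h1 := Submodule.finrank_sup_add_finrank_inf_eq S1 V'ᗮ
      rw [hinfbot] at h1
      simpa using h1
    obtain ⟨S'', hS''le, hS''rank⟩ := exists_submodule_finrank_eq_le (S1 ⊔ V'ᗮ)
      (m := N'.card - (k + (d1 + d2)) + 1) (by omega)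
    refine ⟨S'', by rw [hEN']; exact hS''rank, ?_⟩
    intro a ha hbound u huS
    obtain ⟨s, hs, z, hz, rfl⟩ := Submodule.mem_sup.mp (hS''le huS)
    obtain ⟨w, hwT, rfl⟩ := hs
    obtain ⟨hwmap, hwk1⟩ := Submodule.mem_inf.mp hwT
    obtain ⟨v, hv, rfl⟩ := hwmap
    obtain ⟨hvS, hvV⟩ := Submodule.mem_inf.mp hv
    set w := L v with hwdef
    have hwW : w ∈ W := lift_mem hL v
    have hwN : coordRestrict N w = v := lift_coord_eq hL hvV
    set s := coordRestrict N' w with hsdef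
    have hsV' : s ∈ V' := ⟨w, hwW, rfl⟩
    have hz0 : L' z = 0 := lift_orth_zero hL' hz
    have heq : ((coordRestrict B').comp L') (s + z) = coordRestrict B' (L' s) := by
      simp [map_add, hz0]
    rw [heq]
    have e1 : ‖w‖ ^ 2 = ‖coordRestrict B w‖ ^ 2 + ‖coordRestrict N w‖ ^ 2 :=
      normsq_split hBN hdisj w
    have e2 : ‖w‖ ^ 2 = ‖coordRestrict B' w‖ ^ 2 + ‖s‖ ^ 2 := normsq_split hBN' hdisj' w
    have e3 : ‖coordRestrict N w‖ ^ 2 ≤ ‖s‖ ^ 2 := by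
      rw [hsdef, normsq_coordRestrict, normsq_coordRestrict]
      have hNsum : ∑ i ∈ N, (w i) ^ 2 = ∑ i ∈ N ∩ N', (w i) ^ 2 := by
        refine (Finset.sum_subset Finset.inter_subset_left ?_).symm
        intro i hiN hiNN'
        have hi : i ∈ N \ N' := Finset.mem_sdiff.mpr
          ⟨hiN, fun h => hiNN' (Finset.mem_inter.mpr ⟨hiN, h⟩)⟩
        have h0 := coordRestrict_eq_zero_iff.mp (LinearMap.mem_ker.mp hwk1) i hi
        simp [h0]
      rw [hNsum]
      exact Finset.sum_le_sum_of_subset_of_nonneg Finset.inter_subset_right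
        (fun i _ _ => sq_nonneg _)
    have hb : ‖coordRestrict B w‖ ≤ a * ‖coordRestrict N w‖ := by
      rw [hwN]; exact hbound v hvS
    have hb2 : ‖coordRestrict B w‖ ^ 2 ≤ a ^ 2 * ‖coordRestrict N w‖ ^ 2 := by
      have := pow_le_pow_left₀ (norm_nonneg (coordRestrict B w)) hb 2
      rwa [mul_pow] at this
    have h63 : a ^ 2 * ‖coordRestrict N w‖ ^ 2 ≤ a ^ 2 * ‖s‖ ^ 2 :=
      mul_le_mul_of_nonneg_left e3 (sq_nonneg a)
    have e5 : ‖coordRestrict B' w‖ ^ 2 ≤ a ^ 2 * ‖s‖ ^ 2 := by linarith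
    have hLs : ‖L' s‖ ≤ ‖w‖ := lift_min hL' hwW rfl
    have hcoord : coordRestrict N' (L' s) = s := lift_coord_eq hL' hsV'
    have e4 : ‖L' s‖ ^ 2 = ‖coordRestrict B' (L' s)‖ ^ 2 + ‖s‖ ^ 2 := by
      have h := normsq_split hBN' hdisj' (L' s)
      rwa [hcoord] at h
    have hLs2 : ‖L' s‖ ^ 2 ≤ ‖w‖ ^ 2 := pow_le_pow_left₀ (norm_nonneg (L' s)) hLs 2
    have e6sq : ‖coordRestrict B' (L' s)‖ ^ 2 ≤ (a * ‖s‖) ^ 2 := by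
      rw [mul_pow]; linarith
    have e6 : ‖coordRestrict B' (L' s)‖ ≤ a * ‖s‖ :=
      (pow_le_pow_iff_left₀ (norm_nonneg _) (mul_nonneg ha (norm_nonneg s)) two_ne_zero).mp e6sq
    have e7 : ‖s‖ ≤ ‖s + z‖ := by
      have hinner : (inner ℝ s z : ℝ) = 0 := (Submodule.mem_orthogonal V' z).mp hz s hsV'
      have h := norm_add_sq_real s z
      have hsq : ‖s‖ ^ 2 ≤ ‖s + z‖ ^ 2 := by
        rw [h]; rw [hinner]
        have := sq_nonneg ‖z‖
        linarith
      exact (pow_le_pow_iff_left₀ (norm_nonneg _) (norm_nonneg _) two_ne_zero).mp hsq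
    calc ‖coordRestrict B' (L' s)‖ ≤ a * ‖s‖ := e6
      _ ≤ a * ‖s + z‖ := mul_le_mul_of_nonneg_left e7 ha
  · -- degenerate case: the index exceeds the dimension of the domain
    have h0 : singularValue ((coordRestrict B').comp L') (k + (d1 + d2)) = 0 := by
      unfold singularValue
      rw [if_neg (by rw [hEN']; omega)]
    rw [h0]
    exact singularValue_nonneg _ _
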